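/- Let σ(y) = 1/(1 + e^{−y}), let l < 0 < u and suppose d ∈ [0, u] satisfies the tangency condition σ(d) − σ(l) = σ(d)(1 − σ(d))(d − l). Then for every y ∈ [l, u], σ(y) ≤ σ(l) + σ(d)(1 − σ(d))(y − l); that is, the line through the left endpoint (l, σ(l)) with slope σ'(d) is an upper bound for σ on [l, u]. -/

import Mathlib

/-- The sigmoid (logistic) function `σ(y) = 1 / (1 + exp (-y))`. -/
noncomputable def sigmoid (y : ℝ) : ℝ := 1 / (1 + Real.exp (-y))

lemma sigmoid_hasDerivAt (y : ℝ) :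
    HasDerivAt sigmoid (sigmoid y * (1 - sigmoid y)) y := by
  have hpos : (0:ℝ) < 1 + Real.exp (-y) := by positivity
  have h1 : HasDerivAt (fun x : ℝ => 1 + Real.exp (-x)) (-Real.exp (-y)) y := by
    simpa using (Real.hasDerivAt_exp (-y)).comp y (hasDerivAt_neg y) |>.const_add 1
  have h2 := h1.inv (ne_of_gt hpos)
  have : (fun x : ℝ => 1 + Real.exp (-x))⁻¹ = sigmoid := by
    funext x; simp [sigmoid, one_div]
  rw [this] at h2
  refine h2.congr_deriv ?_
  simp only [sigmoid]
  field_simp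
  ring

lemma sigmoid_deriv_eq (y : ℝ) :
    sigmoid y * (1 - sigmoid y) = Real.exp y / (1 + Real.exp y)^2 := by
  have h1 : (0:ℝ) < 1 + Real.exp (-y) := by positivity
  have h2 : (0:ℝ) < 1 + Real.exp y := by positivity
  have h3 : Real.exp (-y) * Real.exp y = 1 := by
    rw [← Real.exp_add]; simp
  simp only [sigmoid]
  field_simp
  nlinarith [h3]

lemma sigmoid_deriv_le {a b : ℝ} (hb : 0 ≤ b) (h : b ≤ a ∨ a ≤ -b) :
    sigmoid a * (1 - sigmoid a) ≤ sigmoid b * (1 - sigmoid b) := by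
  rw [sigmoid_deriv_eq, sigmoid_deriv_eq]
  have hsa : (0:ℝ) < Real.exp a := Real.exp_pos a
  have hsb : (0:ℝ) < Real.exp b := Real.exp_pos b
  have h2a : (0:ℝ) < (1 + Real.exp a)^2 := by positivity
  have h2b : (0:ℝ) < (1 + Real.exp b)^2 := by positivity
  rw [div_le_div_iff₀ h2a h2b]
  have hab : Real.exp a * Real.exp b = Real.exp (a + b) := (Real.exp_add a b).symm
  rcases h with h | h
  · have h1 : Real.exp b ≤ Real.exp a := Real.exp_le_exp.2 h
    have h2 : (1:ℝ) ≤ Real.exp (a + b) := Real.one_le_exp (by linarith)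
    nlinarith [mul_nonneg (sub_nonneg.2 h1) (sub_nonneg.2 (hab ▸ h2))]
  · have h1 : Real.exp a ≤ Real.exp b := Real.exp_le_exp.2 (by linarith)
    have h2 : Real.exp (a + b) ≤ 1 := Real.exp_le_one_iff.2 (by linarith)
    nlinarith [mul_nonneg (sub_nonneg.2 h1) (sub_nonneg.2 (hab ▸ h2))]

lemma sigmoid_deriv_ge {a b : ℝ} (h1 : -b ≤ a) (h2 : a ≤ b) :
    sigmoid b * (1 - sigmoid b) ≤ sigmoid a * (1 - sigmoid a) := by
  rw [sigmoid_deriv_eq, sigmoid_deriv_eq]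
  have hsa : (0:ℝ) < Real.exp a := Real.exp_pos a
  have hsb : (0:ℝ) < Real.exp b := Real.exp_pos b
  have h2a : (0:ℝ) < (1 + Real.exp a)^2 := by positivity
  have h2b : (0:ℝ) < (1 + Real.exp b)^2 := by positivity
  rw [div_le_div_iff₀ h2b h2a]
  have hab : Real.exp a * Real.exp b = Real.exp (a + b) := (Real.exp_add a b).symm
  have ha : Real.exp a ≤ Real.exp b := Real.exp_le_exp.2 h2
  have hst : (1:ℝ) ≤ Real.exp (a + b) := Real.one_le_exp (by linarith)
  nlinarith [mul_nonneg (sub_nonneg.2 ha) (sub_nonneg.2 (hab ▸ hst))]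

/-- CROWN linear upper bound for an unstable sigmoid neuron (`l < 0 < u`): the line through the
left endpoint `(l, σ l)` with slope `σ' d = σ d * (1 - σ d)`, where `d ∈ [0, u]` is the tangency
point, is an upper bound for `σ` on `[l, u]`. -/
theorem sigmoid_crown_upper_unstable (l u d : ℝ) (hl : l < 0) (hu : 0 < u)
    (hd : d ∈ Set.Icc 0 u)
    (htangent : sigmoid d - sigmoid l = sigmoid d * (1 - sigmoid d) * (d - l)) :
    ∀ y ∈ Set.Icc l u,
      sigmoid y ≤ sigmoid l + sigmoid d * (1 - sigmoid d) * (y - l) := by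
  obtain ⟨hd0, hdu⟩ := hd
  set k := sigmoid d * (1 - sigmoid d) with hk
  set g : ℝ → ℝ := fun y => sigmoid l + k * (y - l) - sigmoid y with hg
  have hgderiv : ∀ y : ℝ, HasDerivAt g (k - sigmoid y * (1 - sigmoid y)) y := by
    intro y
    have h1 : HasDerivAt (fun x : ℝ => sigmoid l + k * (x - l)) k y := by
      simpa using (((hasDerivAt_id y).sub_const l).const_mul k).const_add (sigmoid l)
    exact h1.sub (sigmoid_hasDerivAt y)
  have hderiv : ∀ y : ℝ, deriv g y = k - sigmoid y * (1 - sigmoid y) :=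
    fun y => (hgderiv y).deriv
  have hcont : Continuous g := by
    have : Differentiable ℝ g := fun y => (hgderiv y).differentiableAt
    exact this.continuous
  have hdiff : Differentiable ℝ g := fun y => (hgderiv y).differentiableAt
  set m := max l (-d) with hm
  have hlm : l ≤ m := le_max_left _ _
  have hmd : m ≤ d := max_le (by linarith) (by linarith)
  have hgl : g l = 0 := by simp [hg]
  have hgd : g d = 0 := by simp only [hg]; linarith
  -- monotone on [l, m]
  have hA : MonotoneOn g (Set.Icc l m) := by
    apply monotoneOn_of_deriv_nonneg (convex_Icc l m) hcont.continuousOn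
      (hdiff.differentiableOn)
    intro y hy
    rw [interior_Icc] at hy
    have hlt : l < m := lt_of_le_of_lt (le_of_lt hy.1) hy.2 |>.trans_le le_rfl
    have hmeq : m = -d := by
      rcases max_cases l (-d) with ⟨h1, h2⟩ | ⟨h1, h2⟩
      · exact absurd (h1 ▸ hlt) (lt_irrefl l)
      · exact h1
    rw [hderiv, sub_nonneg]
    exact sigmoid_deriv_le hd0 (Or.inr (by rw [hmeq] at hy; linarith [hy.2]))
  -- antitone on [m, d]
  have hB : AntitoneOn g (Set.Icc m d) := by
    apply antitoneOn_of_deriv_nonpos (convex_Icc m d) hcont.continuousOn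
      (hdiff.differentiableOn)
    intro y hy
    rw [interior_Icc] at hy
    rw [hderiv, sub_nonpos]
    exact sigmoid_deriv_ge (by have := le_max_right l (-d); linarith [hy.1]) (le_of_lt hy.2)
  -- monotone on [d, u]
  have hC : MonotoneOn g (Set.Icc d u) := by
    apply monotoneOn_of_deriv_nonneg (convex_Icc d u) hcont.continuousOn
      (hdiff.differentiableOn)
    intro y hy
    rw [interior_Icc] at hy
    rw [hderiv, sub_nonneg]
    exact sigmoid_deriv_le hd0 (Or.inl (le_of_lt hy.1))
  intro y hy
  obtain ⟨hly, hyu⟩ := hy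
  have key : 0 ≤ g y := by
    rcases le_or_gt y m with h1 | h1
    · calc (0:ℝ) = g l := hgl.symm
        _ ≤ g y := hA ⟨le_refl l, hlm⟩ ⟨hly, h1⟩ hly
    rcases le_or_gt y d with h2 | h2
    · calc (0:ℝ) = g d := hgd.symm
        _ ≤ g y := hB ⟨le_of_lt h1, h2⟩ ⟨hmd, le_refl d⟩ h2
    · calc (0:ℝ) = g d := hgd.symm
        _ ≤ g y := hC ⟨le_refl d, hdu⟩ ⟨le_of_lt h2, hyu⟩ (le_of_lt h2)
  simp only [hg] at key
  linarith
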